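/- Let A be a commutative ring, let q ≥ 1 be an integer, and let c, r be natural numbers with r ≥ (q−1)·c. Let λ ∈ A[[u]] be a power series with zero constant coefficient satisfying the following kernel-order property: for every natural number N with 1 ≤ N ≤ r+1 and every x ∈ A[[u]], if all coefficients of λ · x vanish in degrees < N, then all coefficients of x vanish in degrees < N − c. Let ω ∈ A with ω^q = 0, let β ∈ A[[u]], and let α ∈ A be such that all coefficients of the power series α − β · (λ + ω) vanish in degrees < r + 1, where α and ω are regarded as constant power series. Then α = 0. -/

import Mathlib

private lemma coeff_mul_vanish {A : Type*} [CommRing A] (x y : PowerSeries A) (N : ℕ)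
    (hx : ∀ i < N, PowerSeries.coeff (R := A) i x = 0) :
    ∀ i < N, PowerSeries.coeff (R := A) i (x * y) = 0 := by
  intro i hi
  rw [PowerSeries.coeff_mul]
  apply Finset.sum_eq_zero
  rintro ⟨a, b⟩ hab
  have hab' : a + b = i := Finset.HasAntidiagonal.mem_antidiagonal.mp hab
  have : PowerSeries.coeff (R := A) a x = 0 := hx a (by omega)
  simp [this]

/-- **The inductive argument of Lemma A.2** (injectivity of pullback along the lens-space
bundle in `BP`-cohomology): let `A` be a commutative ring, `q ≥ 1`, and `r ≥ (q-1)·c`.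
Suppose `λ ∈ A[[u]]` has zero constant coefficient and satisfies the kernel-order bound
`c` modulo `u^N` for all `1 ≤ N ≤ r+1`; let `ω ∈ A` with `ω^q = 0`.  If
`α ≡ β·(λ + ω) mod u^{r+1}` for some constant `α` and some `β ∈ A[[u]]`, then `α = 0`. -/
theorem lens_space_pullback_injectivity {A : Type*} [CommRing A]
    (q : ℕ) (hq : 1 ≤ q) (c r : ℕ) (hr : (q - 1) * c ≤ r)
    (lam : PowerSeries A) (hlam : PowerSeries.constantCoeff (R := A) lam = 0)
    (hker : ∀ N : ℕ, 1 ≤ N → N ≤ r + 1 → ∀ x : PowerSeries A,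
      (∀ i < N, PowerSeries.coeff (R := A) i (lam * x) = 0) →
      ∀ i < N - c, PowerSeries.coeff (R := A) i x = 0)
    (ω : A) (hω : ω ^ q = 0) (β : PowerSeries A) (α : A)
    (hcong : ∀ i < r + 1,
      PowerSeries.coeff (R := A) i
        (PowerSeries.C (R := A) α - β * (lam + PowerSeries.C (R := A) ω)) = 0) :
    α = 0 := by
  -- iterated application of the kernel bound
  have hkerpow : ∀ j : ℕ, j * c ≤ r → ∀ x : PowerSeries A,
      (∀ i < r + 1, PowerSeries.coeff (R := A) i (lam ^ j * x) = 0) →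
      ∀ i < r + 1 - j * c, PowerSeries.coeff (R := A) i x = 0 := by
    intro j
    induction j with
    | zero =>
      intro _ x hx i hi
      have := hx i (by simpa using hi)
      simpa using this
    | succ j ih =>
      intro hjc x hx
      have hsm : (j + 1) * c = j * c + c := Nat.succ_mul j c
      have hj : j * c ≤ r := by omega
      have h1 : ∀ i < r + 1 - j * c, PowerSeries.coeff (R := A) i (lam * x) = 0 := by
        apply ih hj
        intro i hi
        have := hx i hi
        rwa [pow_succ, mul_assoc] at this
      have h2 := hker (r + 1 - j * c) (by omega) (by omega) x h1
      intro i hi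
      refine h2 i ?_
      omega
  have key : ∀ t m : ℕ, q ≤ m + t → α * ω ^ m = 0 := by
    intro t
    induction t with
    | zero =>
      intro m hm
      have hpow : ω ^ m = 0 := by
        have h : ω ^ m = ω ^ q * ω ^ (m - q) := by
          rw [← pow_add]; congr 1; omega
        rw [h, hω, zero_mul]
      rw [hpow, mul_zero]
    | succ t ih =>
      intro m hm
      by_cases h : q ≤ m + t
      · exact ih m h
      · have hqm : q = m + t + 1 := by omega
        set τ : PowerSeries A :=
          ∑ i ∈ Finset.range (t + 1), lam ^ i * (-(PowerSeries.C (R := A) ω)) ^ (t - i) with hτdef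
        have hτ : τ * (lam + PowerSeries.C (R := A) ω)
            = lam ^ (t + 1) - (-(PowerSeries.C (R := A) ω)) ^ (t + 1) := by
          have := geom_sum₂_mul lam (-(PowerSeries.C (R := A) ω)) (t + 1)
          simpa [sub_neg_eq_add, hτdef] using this
        -- the sum collapses to the top term after multiplication by C α * C ω^m
        have h1 : PowerSeries.C (R := A) α * τ * PowerSeries.C (R := A) (ω ^ m)
            = lam ^ t * PowerSeries.C (R := A) (α * ω ^ m) := by
          rw [hτdef, Finset.mul_sum, Finset.sum_mul]
          rw [Finset.sum_eq_single t]
          · rw [Nat.sub_self, pow_zero, mul_one, map_mul]; ring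
          · intro i hi hne
            have hlt : i < t := by
              have := Finset.mem_range.mp hi; omega
            have hz : α * ω ^ (m + (t - i)) = 0 := ih _ (by omega)
            have hneg : (-(PowerSeries.C (R := A) ω)) ^ (t - i)
                = (-1 : PowerSeries A) ^ (t - i) * PowerSeries.C (R := A) (ω ^ (t - i)) := by
              rw [neg_pow, map_pow]
            rw [hneg]
            have hC : PowerSeries.C (R := A) α * PowerSeries.C (R := A) (ω ^ (t - i))
                * PowerSeries.C (R := A) (ω ^ m) = PowerSeries.C (R := A) (α * ω ^ (m + (t - i))) := by
              rw [← map_mul, ← map_mul]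
              congr 1
              rw [pow_add]; ring
            calc PowerSeries.C (R := A) α * (lam ^ i
                  * ((-1 : PowerSeries A) ^ (t - i) * PowerSeries.C (R := A) (ω ^ (t - i))))
                  * PowerSeries.C (R := A) (ω ^ m)
                = (-1 : PowerSeries A) ^ (t - i) * lam ^ i
                  * (PowerSeries.C (R := A) α * PowerSeries.C (R := A) (ω ^ (t - i))
                    * PowerSeries.C (R := A) (ω ^ m)) := by ring
              _ = 0 := by rw [hC, hz, map_zero, mul_zero]
          · intro hnot
            exact absurd (Finset.self_mem_range_succ t) hnot
        have h2 : (-(PowerSeries.C (R := A) ω)) ^ (t + 1) * PowerSeries.C (R := A) (ω ^ m) = 0 := by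
          have hz : ω ^ (t + 1 + m) = 0 := by
            rw [show t + 1 + m = q by omega]; exact hω
          have hz' : (PowerSeries.C (R := A) ω) ^ (t + 1) * PowerSeries.C (R := A) (ω ^ m) = 0 := by
            rw [← map_pow, ← map_mul, ← pow_add, hz, map_zero]
          rw [neg_pow, mul_assoc, hz', mul_zero]
        have hEq : (PowerSeries.C (R := A) α - β * (lam + PowerSeries.C (R := A) ω))
              * (τ * PowerSeries.C (R := A) (ω ^ m))
            = lam ^ t * (PowerSeries.C (R := A) (α * ω ^ m)
              - β * lam * PowerSeries.C (R := A) (ω ^ m)) := by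
          linear_combination h1 - β * PowerSeries.C (R := A) (ω ^ m) * hτ + β * h2
        have hS : ∀ i < r + 1, PowerSeries.coeff (R := A) i
            (lam ^ t * (PowerSeries.C (R := A) (α * ω ^ m)
              - β * lam * PowerSeries.C (R := A) (ω ^ m))) = 0 := by
          intro i hi
          rw [← hEq]
          exact coeff_mul_vanish _ _ _ hcong i hi
        have htc : t * c ≤ r := by
          have h1' : t ≤ q - 1 := by omega
          exact le_trans (Nat.mul_le_mul_right c h1') hr
        have hfin := hkerpow t htc _ hS
        have h0 := hfin 0 (by omega)
        rw [PowerSeries.coeff_zero_eq_constantCoeff] at h0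
        simp only [map_sub, map_mul, PowerSeries.constantCoeff_C, hlam,
          mul_zero, zero_mul, sub_zero] at h0
        exact h0
  have := key q 0 (by omega)
  simpa using this
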